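/- Let p be a prime with p ∉ {2, 3}, let n = p^r · n₀ with r an even positive integer and n₀ a positive integer not divisible by p, and let s be a real number with s > 1/2. Then Σ_{k=0}^∞ C(p^k, −n) · p^{−ks} = ((1 − p^{−2s}) / (1 − p^{−s})) · ( (1 − p^{(1−2s)·r/2}) / (1 − p^{1−2s}) + p^{r/2 − rs} / (1 − (−n₀/p) · p^{−s}) ), where (−n₀/p) is the Legendre symbol of −n₀ modulo p. -/

import Mathlib

set_option linter.unusedSectionVars false
set_option maxHeartbeats 1000000

/-- `C m n` is the number of residues `x` modulo `m` with `x² ≡ n (mod m)`. -/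
noncomputable def C (m : ℕ) (n : ℤ) : ℕ := Nat.card {x : ZMod m // x ^ 2 = (n : ZMod m)}

section Aux
variable {p : ℕ} [hp : Fact p.Prime]

lemma castHom_eq_zero_iff {a b : ℕ} (hab : a ≤ b) (z : ZMod (p^b)) :
    ZMod.castHom (pow_dvd_pow p hab) (ZMod (p^a)) z = 0 ↔ (p:ℕ)^a ∣ z.val := by
  rw [ZMod.castHom_apply, ← ZMod.natCast_val, ZMod.natCast_eq_zero_iff]

lemma exists_mul_iff {j k : ℕ} (hjk : j ≤ k) (z : ZMod (p^k)) :
    (∃ t, z = (p:ZMod (p^k))^j * t) ↔ (p:ℕ)^j ∣ z.val := by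
  constructor
  · rintro ⟨t, rfl⟩
    have : ((p:ZMod (p^k))^j * t) = (((p^j * t.val : ℕ) : ZMod (p^k))) := by
      push_cast [ZMod.natCast_val, ZMod.cast_id]; ring
    rw [this, ZMod.val_natCast]
    exact (Nat.dvd_mod_iff (pow_dvd_pow p hjk)).mpr ⟨t.val, rfl⟩
  · rintro ⟨c, hc⟩
    refine ⟨(c : ZMod (p^k)), ?_⟩
    have h2 : z = ((z.val : ℕ) : ZMod (p^k)) := (ZMod.natCast_rightInverse z).symm
    rw [h2, hc]; push_cast; ring

lemma pow_mul_eq_zero_iff {j : ℕ} (w : ZMod (p^(j+1))) :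
    (p:ZMod (p^(j+1)))^j * w = 0 ↔ (p:ℕ) ∣ w.val := by
  have h1 : ((p:ZMod (p^(j+1)))^j * w) = (((p^j * w.val : ℕ) : ZMod (p^(j+1)))) := by
    push_cast [ZMod.natCast_val, ZMod.cast_id]; ring
  rw [h1, ZMod.natCast_eq_zero_iff]
  generalize w.val = v
  rw [pow_succ]
  exact Nat.mul_dvd_mul_iff_left (pow_pos hp.out.pos j)

lemma dvd_val_iff {k : ℕ} (hk : k ≠ 0) (w : ZMod (p^k)) :
    (p:ℕ) ∣ w.val ↔ (ZMod.castHom (dvd_pow_self p hk) (ZMod p)) w = 0 := by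
  rw [ZMod.castHom_apply, ← ZMod.natCast_val, ZMod.natCast_eq_zero_iff]

lemma pow_self_zero (k : ℕ) : (p : ZMod (p^k))^k = 0 := by
  have : ((p^k : ℕ) : ZMod (p^k)) = 0 := ZMod.natCast_self _
  push_cast at this; exact this

lemma C_hensel_step (hp2 : p ≠ 2) (j : ℕ) (u : ℤ) (hu : ¬ (p:ℤ) ∣ u) :
    C (p^(j+2)) u = C (p^(j+1)) u := by
  have hple : j+1 ≤ j+2 := Nat.le_succ _
  set f := ZMod.castHom (pow_dvd_pow p hple) (ZMod (p^(j+1))) with hf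
  set g := ZMod.castHom (dvd_pow_self p (Nat.succ_ne_zero (j+1))) (ZMod p) with hg
  have hu' : ((u : ZMod p)) ≠ 0 := by
    rw [Ne, ZMod.intCast_zmod_eq_zero_iff_dvd]; exact_mod_cast hu
  have h2ne : (2 : ZMod p) ≠ 0 := by
    have : ((2:ℕ) : ZMod p) = 0 ↔ p ∣ 2 := ZMod.natCast_eq_zero_iff 2 p
    intro h; rw [show ((2:ZMod p)) = ((2:ℕ):ZMod p) by norm_cast] at h
    exact hp2 ((Nat.prime_dvd_prime_iff_eq hp.out Nat.prime_two).mp (this.mp h))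
  -- the reduction map on solution sets
  have key : Function.Bijective
      (fun x : {x : ZMod (p^(j+2)) // x ^ 2 = (u : ZMod (p^(j+2)))} =>
        (⟨f x.1, by rw [← map_pow, x.2, map_intCast]⟩ :
          {y : ZMod (p^(j+1)) // y ^ 2 = (u : ZMod (p^(j+1)))})) := by
    constructor
    · rintro ⟨x₁, hx₁⟩ ⟨x₂, hx₂⟩ h
      simp only [Subtype.mk.injEq] at h ⊢
      have h0 : f (x₁ - x₂) = 0 := by rw [map_sub, h, sub_self]
      rw [castHom_eq_zero_iff hple, ← exists_mul_iff hple] at h0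
      obtain ⟨t, ht⟩ := h0
      have hx12 : x₁ = x₂ + (p:ZMod (p^(j+2)))^(j+1) * t := by
        rw [← ht]; ring
      have hsq : (p:ZMod (p^(j+2)))^(j+1) * (2 * x₂ * t) = 0 := by
        have e1 : x₁^2 - x₂^2 = 0 := by rw [hx₁, hx₂, sub_self]
        rw [hx12] at e1
        have e2 : (p:ZMod (p^(j+2)))^(2*(j+1)) = 0 := by
          have : (p:ZMod (p^(j+2)))^(j+2) = 0 := pow_self_zero _
          calc (p:ZMod (p^(j+2)))^(2*(j+1)) = (p:ZMod (p^(j+2)))^(j+2) * (p:ZMod (p^(j+2)))^j := by ring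
          _ = 0 := by rw [this, zero_mul]
        calc (p:ZMod (p^(j+2)))^(j+1) * (2 * x₂ * t)
            = ((x₂ + (p:ZMod (p^(j+2)))^(j+1) * t)^2 - x₂^2) - (p:ZMod (p^(j+2)))^(2*(j+1)) * t^2 := by ring
        _ = 0 := by rw [e1, e2]; ring
      rw [pow_mul_eq_zero_iff, dvd_val_iff (Nat.succ_ne_zero (j+1))] at hsq
      have : (2 : ZMod p) * g x₂ * g t = 0 := by
        rw [← hsq, ← hg, map_mul, map_mul, map_ofNat]
      have hgx₂ : g x₂ ≠ 0 := by
        intro h'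
        have : (g x₂)^2 = (u : ZMod p) := by rw [← map_pow, hx₂, map_intCast]
        rw [h'] at this; simp at this; exact hu' this.symm
      have hgt : g t = 0 := by
        rcases mul_eq_zero.mp this with h' | h'
        · rcases mul_eq_zero.mp h' with h'' | h''
          · exact absurd h'' h2ne
          · exact absurd h'' hgx₂
        · exact h'
      rw [← dvd_val_iff (Nat.succ_ne_zero (j+1))] at hgt
      obtain ⟨t', ht'⟩ := (exists_mul_iff (show 1 ≤ j+2 by omega) t).mpr (by rw [pow_one]; exact hgt)
      rw [hx12, ht']
      have hz : (p:ZMod (p^(j+2)))^(j+1) * ((p:ZMod (p^(j+2)))^1 * t') = 0 := by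
        have e : (p:ZMod (p^(j+2)))^(j+2) = 0 := pow_self_zero _
        calc (p:ZMod (p^(j+2)))^(j+1) * ((p:ZMod (p^(j+2)))^1 * t') = (p:ZMod (p^(j+2)))^(j+2) * t' := by ring
        _ = 0 := by rw [e, zero_mul]
      rw [hz, add_zero]
    · rintro ⟨y, hy⟩
      set Y : ZMod (p^(j+2)) := ((y.val : ℕ) : ZMod (p^(j+2))) with hY
      have hfY : f Y = y := by
        rw [hY, map_natCast]
        exact ZMod.natCast_rightInverse y
      have h0 : f (Y^2 - (u : ZMod (p^(j+2)))) = 0 := by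
        rw [map_sub, map_pow, hfY, map_intCast, hy, sub_self]
      rw [castHom_eq_zero_iff hple, ← exists_mul_iff hple] at h0
      obtain ⟨c, hc⟩ := h0
      have hYsq : Y^2 = (u:ZMod (p^(j+2))) + (p:ZMod (p^(j+2)))^(j+1) * c := by
        linear_combination hc
      have hgY : g Y ≠ 0 := by
        intro h'
        have e1 : (g Y)^2 = (u : ZMod p) := by
          calc (g Y)^2 = g (Y^2) := (map_pow g Y 2).symm
          _ = g ((u:ZMod (p^(j+2)))) + (g ((p:ZMod (p^(j+2)))))^(j+1) * g c := by
              rw [hYsq, map_add, map_mul, map_pow]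
          _ = (u : ZMod p) := by
              rw [map_intCast, map_natCast, ZMod.natCast_self, zero_pow (Nat.succ_ne_zero j), zero_mul, add_zero]
        rw [h'] at e1; simp at e1; exact hu' e1.symm
      have h2Y : (2 : ZMod p) * g Y ≠ 0 := mul_ne_zero h2ne hgY
      set b : ZMod p := - (g c) * ((2:ZMod p) * g Y)⁻¹ with hb
      set e : ZMod (p^(j+2)) := ((b.val : ℕ) : ZMod (p^(j+2))) with he
      have hge : g e = b := by rw [he, map_natCast]; exact ZMod.natCast_rightInverse b
      set x : ZMod (p^(j+2)) := Y + (p:ZMod (p^(j+2)))^(j+1) * e with hx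
      have hsol : x^2 = (u : ZMod (p^(j+2))) := by
        have e2 : (p:ZMod (p^(j+2)))^(2*(j+1)) = 0 := by
          have : (p:ZMod (p^(j+2)))^(j+2) = 0 := pow_self_zero _
          calc (p:ZMod (p^(j+2)))^(2*(j+1)) = (p:ZMod (p^(j+2)))^(j+2) * (p:ZMod (p^(j+2)))^j := by ring
          _ = 0 := by rw [this, zero_mul]
        have hkey : (p:ZMod (p^(j+2)))^(j+1) * (c + 2 * Y * e) = 0 := by
          rw [pow_mul_eq_zero_iff, dvd_val_iff (Nat.succ_ne_zero (j+1))]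
          have : g (c + 2 * Y * e) = g c + (2:ZMod p) * g Y * g e := by
            rw [map_add, map_mul, map_mul, map_ofNat]
          rw [this, hge, hb]
          field_simp
          ring
        calc x^2 = (Y^2 - (u:ZMod (p^(j+2))) - (p:ZMod (p^(j+2)))^(j+1) * c) + (u:ZMod (p^(j+2)))
              + (p:ZMod (p^(j+2)))^(j+1) * (c + 2 * Y * e) + (p:ZMod (p^(j+2)))^(2*(j+1)) * e^2 := by
              rw [hx]; ring
        _ = (u:ZMod (p^(j+2))) := by rw [hc, e2]; linear_combination hkey
      refine ⟨⟨x, hsol⟩, ?_⟩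
      simp only [Subtype.mk.injEq]
      rw [hx, map_add, map_mul, hfY, map_pow, map_natCast, pow_self_zero]
      simp
  unfold C
  exact Nat.card_eq_of_bijective _ key

lemma C_step (j : ℕ) (n : ℤ) : C (p^(j+2)) ((p:ℤ)^2 * n) = p * C (p^j) n := by
  haveI : NeZero (p^j) := ⟨pow_ne_zero _ hp.out.ne_zero⟩
  haveI : NeZero (p^(j+2)) := ⟨pow_ne_zero _ hp.out.ne_zero⟩
  have hpj : 0 < (p:ℕ)^j := pow_pos hp.out.pos j
  have hp0 : 0 < p := hp.out.pos
  have mem : ∀ (c : ZMod p) (w : ZMod (p^j)), w ^ 2 = (n : ZMod (p^j)) →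
      (((p * (w.val + p^j * c.val) : ℕ) : ZMod (p^(j+2))))^2
        = (((p:ℤ)^2 * n : ℤ) : ZMod (p^(j+2))) := by
    intro c w hw
    have hdvd : ((p:ℤ))^j ∣ ((w.val:ℤ)^2 - n) := by
      have h := (ZMod.intCast_zmod_eq_zero_iff_dvd ((w.val:ℤ)^2 - n) (p^j)).mp (by
        push_cast
        rw [ZMod.natCast_val, ZMod.cast_id, hw]
        ring)
      exact_mod_cast h
    obtain ⟨d, hd⟩ := hdvd
    have key : ((p:ℤ) * ((w.val:ℤ) + (p:ℤ)^j * (c.val:ℤ)))^2 - (p:ℤ)^2 * n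
        = (p:ℤ)^(j+2) * (d + 2*(w.val:ℤ)*(c.val:ℤ) + (p:ℤ)^j * (c.val:ℤ)^2) := by
      linear_combination (p:ℤ)^2 * hd
    have h0 : ((((p:ℤ) * ((w.val:ℤ) + (p:ℤ)^j * (c.val:ℤ)))^2 - (p:ℤ)^2 * n : ℤ) :
        ZMod (p^(j+2))) = 0 := by
      rw [key, ZMod.intCast_zmod_eq_zero_iff_dvd]
      push_cast
      exact ⟨_, rfl⟩
    rw [Int.cast_sub, sub_eq_zero] at h0
    push_cast at h0 ⊢
    linear_combination h0
  set F : ZMod p × {w : ZMod (p^j) // w ^ 2 = (n : ZMod (p^j))} →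
      {x : ZMod (p^(j+2)) // x ^ 2 = (((p:ℤ)^2 * n : ℤ) : ZMod (p^(j+2)))} :=
    fun cw => ⟨((p * (cw.2.1.val + p^j * cw.1.val) : ℕ) : ZMod (p^(j+2))), mem _ _ cw.2.2⟩
    with hF
  have hlt : ∀ (c : ZMod p) (w : ZMod (p^j)), p * (w.val + p^j * c.val) < p^(j+2) := by
    intro c w
    have h1 : w.val < p^j := ZMod.val_lt w
    have h2 : c.val < p := ZMod.val_lt c
    have h3 : w.val + p^j * c.val < p^(j+1) := by
      calc w.val + p^j * c.val < p^j + p^j * c.val := by omega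
      _ = p^j * (c.val + 1) := by ring
      _ ≤ p^j * p := Nat.mul_le_mul_left _ (by omega)
      _ = p^(j+1) := (pow_succ p j).symm
    calc p * (w.val + p^j * c.val) < p * p^(j+1) := mul_lt_mul_of_pos_left h3 hp0
    _ = p^(j+2) := by ring
  have hbij : Function.Bijective F := by
    constructor
    · rintro ⟨c₁, w₁, hw₁⟩ ⟨c₂, w₂, hw₂⟩ h
      simp only [hF, Subtype.mk.injEq] at h
      have := congrArg ZMod.val h
      rw [ZMod.val_natCast, ZMod.val_natCast,
        Nat.mod_eq_of_lt (hlt c₁ w₁), Nat.mod_eq_of_lt (hlt c₂ w₂)] at this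
      have heq : w₁.val + p^j * c₁.val = w₂.val + p^j * c₂.val := Nat.eq_of_mul_eq_mul_left hp0 this
      have hw : w₁.val = w₂.val := by
        have := congrArg (· % p^j) heq
        simpa [Nat.add_mul_mod_self_left, Nat.mod_eq_of_lt (ZMod.val_lt w₁),
          Nat.mod_eq_of_lt (ZMod.val_lt w₂)] using this
      have hc : c₁.val = c₂.val := by
        have : p^j * c₁.val = p^j * c₂.val := by omega
        exact Nat.eq_of_mul_eq_mul_left hpj this
      have hw' : w₁ = w₂ := by
        rw [← ZMod.natCast_rightInverse w₁, ← ZMod.natCast_rightInverse w₂, hw]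
      have hc' : c₁ = c₂ := by
        rw [← ZMod.natCast_rightInverse c₁, ← ZMod.natCast_rightInverse c₂, hc]
      simp [hw', hc']
    · rintro ⟨x, hx⟩
      have hdvd : ((p:ℤ))^(j+2) ∣ ((x.val:ℤ)^2 - (p:ℤ)^2 * n) := by
        have h := (ZMod.intCast_zmod_eq_zero_iff_dvd ((x.val:ℤ)^2 - (p:ℤ)^2 * n) (p^(j+2))).mp (by
          push_cast
          rw [ZMod.natCast_val, ZMod.cast_id, hx]
          push_cast
          ring)
        exact_mod_cast h
      obtain ⟨e, he⟩ := hdvd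
      push_cast at he
      have hsq : ((p:ℤ))^2 ∣ ((x.val:ℤ))^2 := by
        refine ⟨n + (p:ℤ)^j * e, ?_⟩
        linear_combination he
      have hpx : (p:ℕ) ∣ x.val := by
        have h1 : ((p:ℤ)) ∣ ((x.val:ℤ))^2 := dvd_trans (dvd_pow_self _ two_ne_zero) hsq
        have h2 : ((p:ℤ)) ∣ ((x.val:ℤ)) := Int.Prime.dvd_pow' (by exact_mod_cast hp.out) h1
        exact_mod_cast h2
      obtain ⟨w', hw'⟩ := hpx
      have hw'lt : w' < p^(j+1) := by
        have := ZMod.val_lt x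
        rw [hw'] at this
        have h3 : p * w' < p * p^(j+1) := by
          calc p * w' < p^(j+2) := this
          _ = p * p^(j+1) := by ring
        exact Nat.lt_of_mul_lt_mul_left h3
      -- w'^2 = n mod p^j
      have hxw : (x.val : ℤ) = (p:ℤ) * (w':ℤ) := by exact_mod_cast hw'
      have h4 : (p:ℤ)^2 * ((w':ℤ)^2 - n) = (p:ℤ)^2 * ((p:ℤ)^j * e) := by
        linear_combination he - ((x.val:ℤ) + (p:ℤ)*(w':ℤ)) * hxw
      have h5 : (w':ℤ)^2 - n = (p:ℤ)^j * e :=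
        mul_left_cancel₀ (pow_ne_zero 2 (by exact_mod_cast hp0.ne')) h4
      have hwn : (((w' : ℕ) : ZMod (p^j)))^2 = (n : ZMod (p^j)) := by
        have : (((w':ℤ)^2 - n : ℤ) : ZMod (p^j)) = 0 := by
          rw [h5, ZMod.intCast_zmod_eq_zero_iff_dvd]
          push_cast
          exact ⟨_, rfl⟩
        rw [Int.cast_sub, sub_eq_zero] at this
        push_cast at this
        exact this
      refine ⟨⟨((w' / p^j : ℕ) : ZMod p), ⟨((w' : ℕ) : ZMod (p^j)), hwn⟩⟩, ?_⟩
      simp only [hF, Subtype.mk.injEq]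
      have hcval : (((w' / p^j : ℕ) : ZMod p)).val = w' / p^j := by
        rw [ZMod.val_natCast]
        apply Nat.mod_eq_of_lt
        rw [Nat.div_lt_iff_lt_mul hpj]
        calc w' < p^(j+1) := hw'lt
        _ = p * p^j := by ring
      have hwval : (((w' : ℕ) : ZMod (p^j))).val = w' % p^j := ZMod.val_natCast _ _
      rw [hcval, hwval, Nat.mod_add_div w' (p^j)]
      calc ((p * w' : ℕ) : ZMod (p^(j+2))) = ((x.val : ℕ) : ZMod (p^(j+2))) := by rw [← hw']
      _ = x := ZMod.natCast_rightInverse x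
  have hcard := Nat.card_eq_of_bijective F hbij
  unfold C
  rw [← hcard, Nat.card_prod, Nat.card_zmod]

lemma C_congr {m : ℕ} {n n' : ℤ} (h : ((n : ZMod m)) = ((n' : ZMod m))) : C m n = C m n' := by
  unfold C; rw [h]

lemma C_one (n : ℤ) : C 1 n = 1 := by
  unfold C
  rw [Nat.card_eq_one_iff_unique]
  exact ⟨⟨fun a b => Subtype.ext (Subsingleton.elim _ _)⟩, ⟨⟨0, Subsingleton.elim _ _⟩⟩⟩

lemma C_p (hp2 : p ≠ 2) (u : ℤ) : (C p u : ℤ) = legendreSym p u + 1 := by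
  unfold C
  rw [← legendreSym.card_sqrts p hp2 u]
  norm_cast
  rw [Set.toFinset_card, Nat.card_eq_fintype_card]
  congr 1

lemma C_p_zero (hp2 : p ≠ 2) : C p 0 = 1 := by
  have := C_p hp2 0
  rw [legendreSym.at_zero] at this
  omega


lemma C_unit (hp2 : p ≠ 2) (j : ℕ) (u : ℤ) (hu : ¬ (p:ℤ) ∣ u) : C (p^(j+1)) u = C p u := by
  induction j with
  | zero => rw [pow_one]
  | succ j ih => rw [C_hensel_step hp2 j u hu, ih]

lemma C_descend (a b : ℕ) (v : ℤ) : C (p^(2*a+b)) ((p:ℤ)^(2*a) * v) = p^a * C (p^b) v := by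
  induction a with
  | zero => simp
  | succ a ih =>
    have h1 : 2*(a+1)+b = (2*a+b)+2 := by ring
    have h2 : (p:ℤ)^(2*(a+1)) * v = (p:ℤ)^2 * ((p:ℤ)^(2*a) * v) := by ring
    rw [h1, h2, C_step, ih]
    ring

-- main counting facts
lemma C_low (hp2 : p ≠ 2) (m : ℕ) (u : ℤ) (k : ℕ) (hk : k ≤ 2*m) :
    C (p^k) ((p:ℤ)^(2*m) * u) = p^(k/2) := by
  set a := k/2 with ha
  set b := k%2 with hb
  have hk' : k = 2*a + b := by omega
  have ham : a ≤ m := by omega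
  have hsplit : (p:ℤ)^(2*m) * u = (p:ℤ)^(2*a) * ((p:ℤ)^(2*(m-a)) * u) := by
    rw [← mul_assoc, ← pow_add]
    congr 2
    omega
  rw [hk', hsplit, C_descend]
  have hb2 : b = 0 ∨ b = 1 := by omega
  rcases hb2 with h | h
  · rw [h, pow_zero, C_one, mul_one]
  · have ham' : a < m := by omega
    rw [h, pow_one]
    have hz : (((p:ℤ)^(2*(m-a)) * u : ℤ) : ZMod p) = ((0 : ℤ) : ZMod p) := by
      push_cast
      rw [ZMod.natCast_self]
      have : 2*(m-a) ≠ 0 := by omega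
      rw [zero_pow this, zero_mul]
    rw [C_congr hz, C_p_zero hp2, mul_one]

lemma C_high (hp2 : p ≠ 2) (m : ℕ) (u : ℤ) (hu : ¬ (p:ℤ) ∣ u) (j : ℕ) :
    (C (p^(2*m+(j+1))) ((p:ℤ)^(2*m) * u) : ℤ) = p^m * (legendreSym p u + 1) := by
  rw [C_descend, C_unit hp2 j u hu]
  push_cast [C_p hp2 u]
  ring

end Aux

theorem stmt_12 (p : ℕ) [Fact p.Prime] (hp2 : p ≠ 2) (hp3 : p ≠ 3)
    (r : ℕ) (hr : Even r) (hrpos : 0 < r) (n₀ : ℕ) (hn₀ : 0 < n₀) (hpn₀ : ¬ p ∣ n₀)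
    (s : ℝ) (hs : 1 / 2 < s) :
    ∑' k : ℕ, (C (p ^ k) (-((p : ℤ) ^ r * n₀)) : ℝ) * (p : ℝ) ^ (-(k : ℝ) * s) =
      ((1 - (p : ℝ) ^ (-(2 * s))) / (1 - (p : ℝ) ^ (-s))) *
        ((1 - (p : ℝ) ^ ((1 - 2 * s) * (r : ℝ) / 2)) / (1 - (p : ℝ) ^ (1 - 2 * s)) +
          (p : ℝ) ^ ((r : ℝ) / 2 - (r : ℝ) * s) /
            (1 - (legendreSym p (-(n₀ : ℤ)) : ℝ) * (p : ℝ) ^ (-s))) := by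
  have hpp : Fact p.Prime := inferInstance
  obtain ⟨m, hm⟩ := hr
  have hrm : r = 2 * m := by omega
  have hm1 : 1 ≤ m := by omega
  have hu : ¬ (p:ℤ) ∣ (-(n₀ : ℤ)) := by
    rw [dvd_neg, Int.natCast_dvd_natCast]
    exact hpn₀
  have hn : ∀ k : ℕ, C (p^k) (-((p:ℤ)^r * n₀)) = C (p^k) ((p:ℤ)^(2*m) * (-(n₀:ℤ))) := by
    intro k
    congr 1
    rw [hrm]; ring
  have hu0 : ((-(n₀:ℤ) : ℤ) : ZMod p) ≠ 0 := by
    rw [Ne, ZMod.intCast_zmod_eq_zero_iff_dvd]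
    exact hu
  have hχpm : legendreSym p (-(n₀:ℤ)) = 1 ∨ legendreSym p (-(n₀:ℤ)) = -1 :=
    legendreSym.eq_one_or_neg_one p hu0
  set χ : ℝ := (legendreSym p (-(n₀:ℤ)) : ℝ) with hχ_def
  have hχ : χ = 1 ∨ χ = -1 := by
    rcases hχpm with h | h
    · left; rw [hχ_def, h]; norm_num
    · right; rw [hχ_def, h]; norm_num
  -- real setup
  set P : ℝ := (p : ℝ) with hP_def
  have hP1 : (1:ℝ) < P := by
    rw [hP_def]; exact_mod_cast hpp.out.one_lt
  have hP0 : (0:ℝ) < P := by linarith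
  set t : ℝ := P ^ (-s) with ht_def
  have ht0 : 0 < t := Real.rpow_pos_of_pos hP0 _
  have ht1 : t < 1 := Real.rpow_lt_one_of_one_lt_of_neg hP1 (by linarith)
  set q : ℝ := P ^ (1 - 2*s) with hq_def
  have hq0 : 0 < q := Real.rpow_pos_of_pos hP0 _
  have hq1 : q < 1 := Real.rpow_lt_one_of_one_lt_of_neg hP1 (by linarith)
  have hqt : q = P * t^2 := by
    rw [hq_def, ht_def, show (1 - 2*s) = 1 + (-s)*(2:ℕ) by push_cast; ring,
      Real.rpow_add hP0, Real.rpow_one, Real.rpow_mul (le_of_lt hP0), Real.rpow_natCast]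
  have hrpowk : ∀ k : ℕ, P ^ (-(k:ℝ) * s) = t ^ k := by
    intro k
    rw [ht_def, show (-(k:ℝ) * s) = (-s) * ((k:ℕ):ℝ) by push_cast; ring,
      Real.rpow_mul (le_of_lt hP0), Real.rpow_natCast]
  -- the summand function
  set g : ℕ → ℝ := fun k => (C (p^k) ((p:ℤ)^(2*m) * (-(n₀:ℤ))) : ℝ) * t ^ k with hg_def
  have hglow : ∀ k, k ≤ 2*m → g k = P ^ (k/2) * t ^ k := by
    intro k hk
    rw [hg_def]
    simp only
    rw [C_low hp2 m _ k hk]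
    push_cast
    ring
  have hghigh : ∀ j : ℕ, g (2*m + (j+1)) = (P^m * (χ + 1)) * t ^ (2*m + (j+1)) := by
    intro j
    rw [hg_def]
    simp only
    have h := C_high hp2 m (-(n₀:ℤ)) hu j
    have h' : (C (p^(2*m+(j+1))) ((p:ℤ)^(2*m) * (-(n₀:ℤ))) : ℝ) = P^m * (χ + 1) := by
      rw [hχ_def, hP_def]
      exact_mod_cast congrArg (fun z : ℤ => (z : ℝ)) h
    rw [h']
  have hgtail : ∀ j : ℕ, g (j + (2*m+1)) = (P^m * (χ + 1) * t^(2*m+1)) * t ^ j := by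
    intro j
    have : j + (2*m+1) = 2*m + (j+1) := by omega
    rw [this, hghigh j, show 2*m + (j+1) = (2*m+1) + j by omega, pow_add]
    ring
  have hsumgeo : Summable (fun j : ℕ => t ^ j) := summable_geometric_of_lt_one (le_of_lt ht0) ht1
  have hsummable : Summable g := by
    rw [← summable_nat_add_iff (2*m+1)]
    have : (fun j : ℕ => g (j + (2*m+1))) = fun j => (P^m * (χ + 1) * t^(2*m+1)) * t ^ j :=
      funext hgtail
    rw [this]
    exact hsumgeo.mul_left _
  -- split the sum
  have hsplit := Summable.sum_add_tsum_nat_add (f := g) (2*m+1) hsummable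
  have htail : (∑' j : ℕ, g (j + (2*m+1))) = (P^m * (χ + 1) * t^(2*m+1)) * (1-t)⁻¹ := by
    rw [tsum_congr hgtail, tsum_mul_left, tsum_geometric_of_lt_one (le_of_lt ht0) ht1]
  have h1q : (1:ℝ) - q ≠ 0 := ne_of_gt (by linarith)
  have h1t : (1:ℝ) - t ≠ 0 := ne_of_gt (by linarith)
  have hhead : ∀ M : ℕ, (∑ i ∈ Finset.range (2*M+1), P ^ (i/2) * t ^ i)
      = (1+t) * (1 - q^M)/(1-q) + q^M := by
    intro M
    induction M with
    | zero => simp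
    | succ M ih =>
      have e1 : 2*(M+1)+1 = (2*M+1) + 1 + 1 := by omega
      rw [e1, Finset.sum_range_succ, Finset.sum_range_succ, ih]
      have e2 : (2*M+1)/2 = M := by omega
      have e3 : (2*M+1+1)/2 = M+1 := by omega
      rw [e2, e3]
      have e4 : t ^ (2*M+1) = (t^2)^M * t := by rw [show 2*M+1 = 2*M + 1 by rfl, pow_add, pow_mul]; ring
      have e5 : t ^ (2*M+1+1) = (t^2)^(M+1) := by rw [show 2*M+1+1 = 2*(M+1) by omega, pow_mul]
      rw [e4, e5]
      have e6 : P^M * ((t^2)^M * t) = q^M * t := by rw [hqt, mul_pow]; ring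
      have e7 : P^(M+1) * (t^2)^(M+1) = q^(M+1) := by rw [hqt, mul_pow]
      rw [e6, e7]
      field_simp
      ring
  have hheadsum : (∑ i ∈ Finset.range (2*m+1), g i) = (1+t) * (1 - q^m)/(1-q) + q^m := by
    rw [← hhead m]
    apply Finset.sum_congr rfl
    intro i hi
    rw [Finset.mem_range] at hi
    exact hglow i (by omega)
  -- assemble LHS
  have hLHS : (∑' k : ℕ, (C (p ^ k) (-((p : ℤ) ^ r * n₀)) : ℝ) * P ^ (-(k:ℝ) * s))
      = ((1+t) * (1 - q^m)/(1-q) + q^m) + (P^m * (χ + 1) * t^(2*m+1)) * (1-t)⁻¹ := by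
    have : ∀ k : ℕ, (C (p ^ k) (-((p : ℤ) ^ r * n₀)) : ℝ) * P ^ (-(k:ℝ) * s) = g k := by
      intro k
      rw [hn k, hrpowk k, hg_def]
    rw [tsum_congr this, ← hsplit, hheadsum, htail]
  rw [hLHS]
  -- rewrite RHS rpow's
  have hR1 : P ^ (-(2*s)) = t^2 := by
    rw [ht_def, show (-(2*s)) = (-s) * ((2:ℕ):ℝ) by push_cast; ring,
      Real.rpow_mul (le_of_lt hP0), Real.rpow_natCast]
  have hR2 : P ^ ((1 - 2*s) * (r:ℝ) / 2) = q^m := by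
    rw [hq_def, show ((1 - 2*s) * (r:ℝ) / 2) = (1-2*s) * ((m:ℕ):ℝ) by
        rw [hrm]; push_cast; ring,
      Real.rpow_mul (le_of_lt hP0), Real.rpow_natCast]
  have hR3 : P ^ ((r:ℝ)/2 - (r:ℝ)*s) = q^m := by
    rw [hq_def, show ((r:ℝ)/2 - (r:ℝ)*s) = (1-2*s) * ((m:ℕ):ℝ) by
        rw [hrm]; push_cast; ring,
      Real.rpow_mul (le_of_lt hP0), Real.rpow_natCast]
  rw [hR1, hR2, hR3]
  have hPmt : P^m * t^(2*m+1) = q^m * t := by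
    rw [hqt, mul_pow, show 2*m+1 = 2*m+1 by rfl, pow_add, pow_mul]
    ring
  have hL2 : P^m * (χ + 1) * t^(2*m+1) * (1-t)⁻¹ = q^m * t * (χ+1) * (1-t)⁻¹ := by
    rw [← hPmt]; ring
  rw [hL2]
  rcases hχ with h | h
  · rw [h]
    rw [show (1:ℝ) - 1 * t = 1 - t by ring]
    field_simp
    ring
  · rw [h]
    have h1pt : (1:ℝ) - (-1) * t ≠ 0 := by
      have : (1:ℝ) - (-1) * t = 1 + t := by ring
      rw [this]
      linarith
    have h1pt' : (1:ℝ) + t ≠ 0 := (by linarith : (0:ℝ) < 1 + t).ne'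
    rw [show (1:ℝ) - (-1) * t = 1 + t by ring]
    field_simp
    ring
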